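/- For any integer m ≥ 1 and any sequence c : ℕ → ℤ satisfying c(n+m+1) + c(n) = [c(n+m)]₊ + [c(n+1)]₊ for all n ≥ 0, the difference sequence Δ(n) := c(n+m) − c(n) is bounded above; moreover there exist N ∈ ℕ and an integer K ≥ 0 such that Δ(n) = K for all n ≥ N. -/
import Mathlib


/-- The difference sequence `Δ(n) = c(n+m) − c(n)` of the tropical coefficient recurrence is
bounded above and eventually equal to a nonnegative integer constant. -/
theorem tropical_coeff_difference_bounded_and_eventually_constant (m : ℕ) (hm : 1 ≤ m)
    (c : ℕ → ℤ)
    (hrec : ∀ n : ℕ, c (n + m + 1) + c n = max 0 (c (n + m)) + max 0 (c (n + 1))) :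
    (∃ B : ℤ, ∀ n : ℕ, c (n + m) - c n ≤ B) ∧
    (∃ N : ℕ, ∃ K : ℤ, 0 ≤ K ∧ ∀ n ≥ N, c (n + m) - c n = K) := by
  set d : ℕ → ℤ := fun n => c (n + m) - c n with hd
  have hstep : ∀ n, d (n + 1) =
      d n + (max 0 (c (n + m)) - c (n + m)) + (max 0 (c (n + 1)) - c (n + 1)) := by
    intro n
    have h := hrec n
    have he : n + 1 + m = n + m + 1 := by omega
    simp only [hd, he]
    linarith
  have hmono : Monotone d := by
    apply monotone_nat_of_le_succ
    intro n
    have h := hstep n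
    have h1 : c (n + m) ≤ max 0 (c (n + m)) := le_max_right _ _
    have h2 : c (n + 1) ≤ max 0 (c (n + 1)) := le_max_right _ _
    linarith
  -- if c is nonnegative beyond M, then d is constant on [M, ∞)
  have hconst_of : ∀ M : ℕ, (∀ j ≥ M + 1, 0 ≤ c j) → ∀ n ≥ M, d n = d M := by
    intro M hc n hn
    induction n with
    | zero =>
      have : M = 0 := by omega
      simp [this]
    | succ k ih =>
      rcases Nat.eq_or_lt_of_le hn with h | h
      · rw [← h]
      · have hk : M ≤ k := by omega
        have h1 : max 0 (c (k + m)) = c (k + m) :=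
          max_eq_right (hc _ (by omega))
        have h2 : max 0 (c (k + 1)) = c (k + 1) :=
          max_eq_right (hc _ (by omega))
        have := hstep k
        rw [h1, h2] at this
        have hdd : d (k + 1) = d k := by linarith
        rw [hdd]
        exact ih hk
  -- if d is constant K on [M, ∞), then K ≥ 0
  have hKnonneg : ∀ M : ℕ, ∀ K : ℤ, (∀ n ≥ M, d n = K) → 0 ≤ K := by
    intro M K hK
    -- constancy forces c nonnegative beyond M
    have hc : ∀ j ≥ M + 1, 0 ≤ c j := by
      intro j hj
      obtain ⟨n, rfl⟩ : ∃ n, j = n + 1 := ⟨j - 1, by omega⟩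
      have hn : M ≤ n := by omega
      have h := hstep n
      rw [hK n hn, hK (n + 1) (by omega)] at h
      have h1 : c (n + m) ≤ max 0 (c (n + m)) := le_max_right _ _
      have h2 : c (n + 1) ≤ max 0 (c (n + 1)) := le_max_right _ _
      have h3 : max 0 (c (n + 1)) = c (n + 1) := by linarith
      have h4 : 0 ≤ max 0 (c (n + 1)) := le_max_left _ _
      linarith
    -- c (j + k*m) = c j + k * K for j ≥ M+1
    have hiter : ∀ k : ℕ, ∀ j ≥ M + 1, c (j + k * m) = c j + k * K := by
      intro k
      induction k with
      | zero => intro j hj; simp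
      | succ i ih =>
        intro j hj
        have h1 := ih j hj
        have h2 : d (j + i * m) = K := hK _ (by omega)
        simp only [hd] at h2
        have he : j + (i + 1) * m = j + i * m + m := by ring
        rw [he]
        push_cast
        linarith
    by_contra hneg
    push_neg at hneg
    set k : ℕ := (c (M + 1)).toNat + 1 with hk
    have h1 := hiter k (M + 1) (le_refl _)
    have h2 : 0 ≤ c (M + 1 + k * m) := hc _ (by omega)
    have h3 : 0 ≤ c (M + 1) := hc _ (le_refl _)
    have h4 : c (M + 1) < (k : ℤ) := by
      have := Int.self_le_toNat (c (M + 1))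
      push_cast [hk]
      omega
    have h5 : (k : ℤ) * K ≤ -k := by
      have hk1 : (1 : ℤ) ≤ k := by simp [hk]
      nlinarith
    linarith
  -- main case split
  by_cases hcase : ∃ N, 1 ≤ d N
  · obtain ⟨N, hN⟩ := hcase
    have hge : ∀ n ≥ N, 1 ≤ d n := fun n hn => le_trans hN (hmono hn)
    have hgrow : ∀ k : ℕ, ∀ n ≥ N, c n + k ≤ c (n + k * m) := by
      intro k
      induction k with
      | zero => intro n hn; simp
      | succ i ih =>
        intro n hn
        have h1 := ih n hn
        have h2 : 1 ≤ d (n + i * m) := hge _ (by omega)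
        simp only [hd] at h2
        have he : n + (i + 1) * m = n + i * m + m := by ring
        rw [he]
        push_cast
        push_cast at h1
        linarith
    -- lower bound on initial segment
    obtain ⟨L, hL⟩ : ∃ L : ℤ, ∀ j < N + m, -L ≤ c j := by
      refine ⟨(Finset.range (N + m)).sup' (Finset.nonempty_range_iff.mpr (by omega))
        (fun j => -(c j)), fun j hj => ?_⟩
      have := Finset.le_sup' (f := fun j => -(c j))
        (Finset.mem_range.mpr hj)
      linarith
    set M : ℕ := N + (L.toNat + 1) * m with hM
    have hcpos : ∀ n ≥ M, 0 ≤ c n := by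
      intro n hn
      have hNn : N ≤ n := by omega
      have hmd : (n - N) % m + (n - N) / m * m = n - N := Nat.mod_add_div' _ _
      have hrlt : (n - N) % m < m := Nat.mod_lt _ (by omega)
      have heq : (N + (n - N) % m) + ((n - N) / m) * m = n := by omega
      have hkge : L.toNat + 1 ≤ (n - N) / m := by
        rw [Nat.le_div_iff_mul_le (show 0 < m by omega)]
        omega
      have h1 := hgrow ((n - N) / m) (N + (n - N) % m) (by omega)
      rw [heq] at h1
      have h2 := hL (N + (n - N) % m) (by omega)
      have h3 : L ≤ (L.toNat : ℤ) := Int.self_le_toNat L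
      have h4 : (L.toNat : ℤ) + 1 ≤ (((n - N) / m : ℕ) : ℤ) := by exact_mod_cast hkge
      linarith
    have hconst : ∀ n ≥ M, d n = d M :=
      hconst_of M (fun j hj => hcpos j (Nat.le_of_succ_le hj))
    have hNM : N ≤ M := by rw [hM]; exact Nat.le_add_right _ _
    have hK0 : 0 ≤ d M := le_trans (le_trans zero_le_one hN) (hmono hNM)
    constructor
    · refine ⟨d M, fun n => ?_⟩
      calc d n ≤ d (max n M) := hmono (le_max_left _ _)
        _ = d M := hconst _ (le_max_right _ _)
    · exact ⟨M, d M, hK0, hconst⟩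
  · push_neg at hcase
    have hle : ∀ n, d n ≤ 0 := fun n => by have := hcase n; omega
    obtain ⟨g, ⟨⟨N, hNg⟩, hgub⟩⟩ :=
      Int.exists_greatest_of_bdd (P := fun x => ∃ n, d n = x)
        ⟨0, fun x hx => by obtain ⟨n, rfl⟩ := hx; exact hle n⟩ ⟨d 0, 0, rfl⟩
    have hconst : ∀ n ≥ N, d n = g := by
      intro n hn
      have h1 : d n ≤ g := hgub (d n) ⟨n, rfl⟩
      have h2 : g ≤ d n := hNg ▸ hmono hn
      omega
    have hK0 : 0 ≤ g := hKnonneg N g hconst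
    constructor
    · exact ⟨g, fun n => hgub (d n) ⟨n, rfl⟩⟩
    · exact ⟨N, g, hK0, hconst⟩
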